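/- arXiv:2409.14004 — 2 statements merged into one kernel-verified Lean document; each statement's English description precedes it below -/
import Mathlib

section
/- For piecewise H¹ functions w, v on a partition of the periodic interval I = (0, 2π) and weights θ₁, θ₂ ∈ ℝ, the DG operators satisfy the generalized skew-symmetry identity H^{θ₁}(w, v) + H^{θ₂}(v, w) = ((1-θ₂) - θ₁) Σ_{j=1}^{N} [w]_{j-1/2} [v]_{j-1/2}. -/
open scoped BigOperators

/-- Left (minus-side) trace of the piecewise function `w` at the node `x_{j+1/2}`
(node indexed by `j : Fin N`, located at the right endpoint of cell `j`). -/
def dgTraceM (N : ℕ) [NeZero N] (x : Fin (N + 1) → ℝ) (w : Fin N → ℝ → ℝ) (j : Fin N) : ℝ :=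
  w j (x j.succ)

/-- Right (plus-side) trace of `w` at the node `x_{j+1/2}`, taken from the next cell
(periodic identification: cell indices wrap modulo `N`). -/
def dgTraceP (N : ℕ) [NeZero N] (x : Fin (N + 1) → ℝ) (w : Fin N → ℝ → ℝ) (j : Fin N) : ℝ :=
  w (j + 1) (x (j + 1 : Fin N).castSucc)

/-- The DG operator `H^α(w, v) = Σ_j ( ∫_{I_j} w v_x − w^{(α)}_{j+1/2} v^-_{j+1/2}
+ w^{(α)}_{j-1/2} v^+_{j-1/2} )`, where `w^{(α)} = α w^- + (1-α) w^+`. -/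
noncomputable def dgH (N : ℕ) [NeZero N] (x : Fin (N + 1) → ℝ) (α : ℝ) (w v v' : Fin N → ℝ → ℝ) : ℝ :=
  ∑ j : Fin N,
    ((∫ t in (x j.castSucc)..(x j.succ), w j t * v' j t)
      - (α * dgTraceM N x w j + (1 - α) * dgTraceP N x w j) * dgTraceM N x v j
      + (α * dgTraceM N x w (j - 1) + (1 - α) * dgTraceP N x w (j - 1)) *
          dgTraceP N x v (j - 1))

/-- generalized skew-symmetry identity
`H^{θ₁}(w, v) + H^{θ₂}(v, w) = ((1-θ₂) - θ₁) Σ_j [w]_{j-1/2} [v]_{j-1/2}`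
for piecewise `H¹` functions on a periodic partition of `I = (0, 2π)`. -/
theorem dg_generalized_skew_symmetry
    (N : ℕ) [NeZero N] (x : Fin (N + 1) → ℝ)
    (hx : ∀ j : Fin N, x j.castSucc < x j.succ)
    (hx0 : x 0 = 0) (hx2π : x (Fin.last N) = 2 * Real.pi)
    (θ₁ θ₂ : ℝ)
    (w v w' v' : Fin N → ℝ → ℝ)
    (hw : ∀ j : Fin N, ∀ t ∈ Set.Icc (x j.castSucc) (x j.succ),
      HasDerivAt (w j) (w' j t) t)
    (hv : ∀ j : Fin N, ∀ t ∈ Set.Icc (x j.castSucc) (x j.succ),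
      HasDerivAt (v j) (v' j t) t)
    (hwv : ∀ j : Fin N,
      IntervalIntegrable (fun t => w j t * v' j t) MeasureTheory.volume
        (x j.castSucc) (x j.succ))
    (hvw : ∀ j : Fin N,
      IntervalIntegrable (fun t => v j t * w' j t) MeasureTheory.volume
        (x j.castSucc) (x j.succ)) :
    dgH N x θ₁ w v v' + dgH N x θ₂ v w w' =
      ((1 - θ₂) - θ₁) *
        ∑ j : Fin N,
          (dgTraceP N x w (j - 1) - dgTraceM N x w (j - 1)) *
            (dgTraceP N x v (j - 1) - dgTraceM N x v (j - 1)) := by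
  have key : ∀ j : Fin N, (∫ t in (x j.castSucc)..(x j.succ), w j t * v' j t)
      + (∫ t in (x j.castSucc)..(x j.succ), v j t * w' j t)
      = dgTraceM N x w j * dgTraceM N x v j
        - dgTraceP N x w (j - 1) * dgTraceP N x v (j - 1) := by
    intro j
    have hab : x j.castSucc ≤ x j.succ := (hx j).le
    have hderiv : ∀ t ∈ Set.uIcc (x j.castSucc) (x j.succ),
        HasDerivAt (fun t => w j t * v j t) (v j t * w' j t + w j t * v' j t) t := by
      intro t ht
      rw [Set.uIcc_of_le hab] at ht
      have h := (hw j t ht).mul (hv j t ht)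
      exact h.congr_deriv (by ring)
    have hint : IntervalIntegrable (fun t => v j t * w' j t + w j t * v' j t)
        MeasureTheory.volume (x j.castSucc) (x j.succ) := (hvw j).add (hwv j)
    have hmain := intervalIntegral.integral_eq_sub_of_hasDerivAt hderiv hint
    rw [intervalIntegral.integral_add (hvw j) (hwv j)] at hmain
    have hjm : (j - 1) + 1 = j := sub_add_cancel j 1
    simp only [dgTraceM, dgTraceP, hjm]
    linarith [hmain]
  have reindex : ∀ g : Fin N → ℝ, ∑ j : Fin N, g (j - 1) = ∑ j : Fin N, g j :=
    fun g => Fintype.sum_equiv (Equiv.subRight 1) _ _ (fun j => rfl)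
  set wm := dgTraceM N x w with hwm
  set wp := dgTraceP N x w with hwp
  set vm := dgTraceM N x v with hvm
  set vp := dgTraceP N x v with hvp
  set A : Fin N → ℝ := fun k => wm k * vm k
    - (θ₁ * wm k + (1 - θ₁) * wp k) * vm k
    - (θ₂ * vm k + (1 - θ₂) * vp k) * wm k with hA
  set B : Fin N → ℝ := fun k => -(wp k * vp k)
    + (θ₁ * wm k + (1 - θ₁) * wp k) * vp k
    + (θ₂ * vm k + (1 - θ₂) * vp k) * wp k with hB
  unfold dgH
  rw [← hwm, ← hwp, ← hvm, ← hvp]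
  rw [← Finset.sum_add_distrib]
  calc
    ∑ j : Fin N,
        (((∫ t in (x j.castSucc)..(x j.succ), w j t * v' j t)
            - (θ₁ * wm j + (1 - θ₁) * wp j) * vm j
            + (θ₁ * wm (j - 1) + (1 - θ₁) * wp (j - 1)) * vp (j - 1))
          + ((∫ t in (x j.castSucc)..(x j.succ), v j t * w' j t)
            - (θ₂ * vm j + (1 - θ₂) * vp j) * wm j
            + (θ₂ * vm (j - 1) + (1 - θ₂) * vp (j - 1)) * wp (j - 1)))
        = ∑ j : Fin N, (A j + B (j - 1)) := by
      refine Finset.sum_congr rfl fun j _ => ?_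
      have hk := key j
      rw [hA, hB]
      simp only
      linarith [hk]
    _ = ∑ j : Fin N, A j + ∑ j : Fin N, B (j - 1) := Finset.sum_add_distrib
    _ = ∑ j : Fin N, A (j - 1) + ∑ j : Fin N, B (j - 1) := by rw [reindex A]
    _ = ∑ j : Fin N, (A (j - 1) + B (j - 1)) := Finset.sum_add_distrib.symm
    _ = ((1 - θ₂) - θ₁) * ∑ j : Fin N,
          (wp (j - 1) - wm (j - 1)) * (vp (j - 1) - vm (j - 1)) := by
      rw [Finset.mul_sum]
      refine Finset.sum_congr rfl fun j _ => ?_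
      rw [hA, hB]
      simp only
      ring
end

section
/- Uniqueness via jump seminorm on periodic meshes: let w_h be a piecewise polynomial of degree ≤ k on a periodic partition of I such that H^{λ}(w_h, φ) = 0 for all piecewise polynomials φ of degree ≤ k, with λ > 1/2, and ∫_I w_h = 0. Then all jumps of w_h vanish and, if additionally H^{λ}(w_h,w_h)=0 forces Σ_j[w_h]² = 0 and w_h is a global constant, it follows that w_h ≡ 0. -/
open scoped BigOperators

/-- Membership in the DG space `V_h`: piecewise polynomial of degree `≤ k`. -/
def isDGPoly (N k : ℕ) (w : Fin N → ℝ → ℝ) : Prop :=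
  ∀ j : Fin N, ∃ p : Polynomial ℝ, p.natDegree ≤ k ∧ w j = fun t => p.eval t

open Polynomial MeasureTheory intervalIntegral in
/-- Integration by parts for polynomials. -/
lemma dg_parts (p q : Polynomial ℝ) (a b : ℝ) :
    ∫ t in a..b, p.eval t * (derivative q).eval t
      = p.eval b * q.eval b - p.eval a * q.eval a
        - ∫ t in a..b, (derivative p).eval t * q.eval t :=
  integral_mul_deriv_eq_deriv_mul (fun x _ => p.hasDerivAt x) (fun x _ => q.hasDerivAt x)
    ((derivative p).continuous.intervalIntegrable _ _)
    ((derivative q).continuous.intervalIntegrable _ _)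

open Polynomial MeasureTheory intervalIntegral in
lemma dg_self_parts (p : Polynomial ℝ) (a b : ℝ) :
    ∫ t in a..b, p.eval t * (derivative p).eval t
      = (p.eval b ^ 2 - p.eval a ^ 2) / 2 := by
  have h := dg_parts p p a b
  have h2 : (∫ t in a..b, (derivative p).eval t * p.eval t)
      = ∫ t in a..b, p.eval t * (derivative p).eval t := by
    simp [mul_comm]
  rw [h2] at h
  nlinarith [h]

open Polynomial MeasureTheory intervalIntegral in
/-- A polynomial whose square has zero integral over a nondegenerate interval is zero. -/
lemma dg_deriv_zero (q : Polynomial ℝ) (a b : ℝ) (hab : a < b)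
    (h : (∫ t in a..b, (q.eval t) ^ 2) = 0) : q = 0 := by
  by_contra hq
  have hroots : Set.Finite {t : ℝ | q.IsRoot t} := q.finite_setOf_isRoot hq
  have hint : IntervalIntegrable (fun t => (q.eval t) ^ 2) volume a b :=
    (q.continuous.pow 2).intervalIntegrable _ _
  have hae := (integral_eq_zero_iff_of_le_of_nonneg_ae hab.le
    (Filter.Eventually.of_forall (fun t => sq_nonneg _)) hint).mp h
  have hae2 : ∀ᵐ t ∂(volume.restrict (Set.Ioc a b)), q.eval t = 0 := by
    filter_upwards [hae] with t ht
    exact pow_eq_zero_iff (n := 2) (by norm_num) |>.mp ht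
  have hmeas : volume ({t : ℝ | ¬ q.eval t = 0} ∩ Set.Ioc a b) = 0 := by
    have := (ae_restrict_iff' measurableSet_Ioc).mp hae2
    rw [ae_iff] at this
    convert this using 2
    ext t
    simp only [Set.mem_inter_iff, Set.mem_setOf_eq, Set.mem_Ioc]
    tauto
  have hsub : Set.Ioc a b ⊆ ({t : ℝ | ¬ q.eval t = 0} ∩ Set.Ioc a b) ∪ {t : ℝ | q.IsRoot t} := by
    intro t ht
    by_cases h0 : q.eval t = 0
    · exact Or.inr h0
    · exact Or.inl ⟨h0, ht⟩
  have : volume (Set.Ioc a b) = 0 := by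
    refine le_antisymm ?_ zero_le
    calc volume (Set.Ioc a b) ≤ _ := measure_mono hsub
    _ ≤ volume ({t : ℝ | ¬ q.eval t = 0} ∩ Set.Ioc a b) + volume {t : ℝ | q.IsRoot t} :=
        measure_union_le _ _
    _ = 0 := by rw [hmeas, hroots.measure_zero, add_zero]
  rw [Real.volume_Ioc] at this
  simp only [ENNReal.ofReal_eq_zero] at this
  linarith

/-- Cyclic-sum identity for the jump seminorm. -/
lemma dg_cyclic_jump (N : ℕ) [NeZero N] (lam : ℝ) (M P F : Fin N → ℝ)
    (hF : ∀ j, F j = (M j ^ 2 - P (j - 1) ^ 2) / 2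
      - (lam * M j + (1 - lam) * P j) * M j
      + (lam * M (j - 1) + (1 - lam) * P (j - 1)) * P (j - 1)) :
    ∑ j, F j = (1 / 2 - lam) * ∑ j, (P j - M j) ^ 2 := by
  have reidx : ∀ g : Fin N → ℝ, ∑ j : Fin N, g (j - 1) = ∑ j, g j := fun g => by
    have := Equiv.sum_comp (Equiv.subRight (1 : Fin N)) g
    simpa [Equiv.subRight_apply] using this
  calc ∑ j, F j
      = ∑ j : Fin N, ((M j ^ 2 / 2 - (lam * M j + (1 - lam) * P j) * M j)
        + (-(P (j - 1)) ^ 2 / 2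
          + (lam * M (j - 1) + (1 - lam) * P (j - 1)) * P (j - 1))) := by
        refine Finset.sum_congr rfl fun j _ => ?_
        rw [hF]; ring
    _ = (∑ j : Fin N, (M j ^ 2 / 2 - (lam * M j + (1 - lam) * P j) * M j))
        + ∑ j : Fin N, (-(P (j - 1)) ^ 2 / 2
          + (lam * M (j - 1) + (1 - lam) * P (j - 1)) * P (j - 1)) :=
        Finset.sum_add_distrib
    _ = (∑ j : Fin N, (M j ^ 2 / 2 - (lam * M j + (1 - lam) * P j) * M j))
        + ∑ j : Fin N, (-(P j) ^ 2 / 2 + (lam * M j + (1 - lam) * P j) * P j) := by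
        rw [reidx (fun j => -(P j) ^ 2 / 2 + (lam * M j + (1 - lam) * P j) * P j)]
    _ = ∑ j : Fin N, ((1 / 2 - lam) * (P j - M j) ^ 2) := by
        rw [← Finset.sum_add_distrib]
        refine Finset.sum_congr rfl fun j _ => ?_
        ring
    _ = _ := by rw [← Finset.mul_sum]

/-- Extension of a `Fin`-indexed grid to `ℕ`. -/
noncomputable def dgGrid (N : ℕ) (x : Fin (N + 1) → ℝ) (i : ℕ) : ℝ :=
  if h : i < N + 1 then x ⟨i, h⟩ else 0

/-- Telescoping sum over a `Fin` partition. -/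
lemma dg_telescope (N : ℕ) (x : Fin (N + 1) → ℝ) :
    ∑ j : Fin N, (x j.succ - x j.castSucc) = x (Fin.last N) - x 0 := by
  have key : ∀ j : Fin N,
      x j.succ - x j.castSucc = dgGrid N x (j.val + 1) - dgGrid N x j.val := by
    intro j
    rw [dgGrid, dgGrid, dif_pos (Nat.succ_lt_succ j.isLt), dif_pos (Nat.lt_succ_of_lt j.isLt)]
    rfl
  have h1 : ∑ j : Fin N, (x j.succ - x j.castSucc)
      = ∑ j : Fin N, (fun i : ℕ => dgGrid N x (i + 1) - dgGrid N x i) (j : ℕ) :=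
    Finset.sum_congr rfl fun j _ => key j
  rw [h1, Fin.sum_univ_eq_sum_range (fun i : ℕ => dgGrid N x (i + 1) - dgGrid N x i) N,
    Finset.sum_range_sub (dgGrid N x) N]
  rw [dgGrid, dgGrid, dif_pos (Nat.lt_succ_self N), dif_pos (Nat.succ_pos N)]
  rfl

open Polynomial MeasureTheory intervalIntegral Fin.NatCast in
/-- uniqueness via the jump seminorm on periodic meshes. If
`w_h ∈ V_h` satisfies `H^λ(w_h, φ) = 0` for all `φ ∈ V_h` with `λ > 1/2`, and
`∫_I w_h = 0`, then all jumps of `w_h` vanish and `w_h ≡ 0`. -/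
theorem dg_uniqueness_zero_mean
    (N : ℕ) [NeZero N] (k : ℕ) (x : Fin (N + 1) → ℝ)
    (hx : ∀ j : Fin N, x j.castSucc < x j.succ)
    (hx0 : x 0 = 0) (hx2π : x (Fin.last N) = 2 * Real.pi)
    (lam : ℝ) (hlam : 1 / 2 < lam)
    (w : Fin N → ℝ → ℝ) (hw : isDGPoly N k w)
    (hH : ∀ φ : Fin N → ℝ → ℝ, isDGPoly N k φ →
      dgH N x lam w φ (fun j => deriv (φ j)) = 0)
    (hmean : ∑ j : Fin N, ∫ t in (x j.castSucc)..(x j.succ), w j t = 0) :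
    (∀ j : Fin N, dgTraceP N x w j - dgTraceM N x w j = 0) ∧
      ∀ j : Fin N, ∀ t ∈ Set.Icc (x j.castSucc) (x j.succ), w j t = 0 := by
  classical
  set p : Fin N → Polynomial ℝ := fun j => (hw j).choose with hpdef
  have hpdeg : ∀ j, (p j).natDegree ≤ k := fun j => (hw j).choose_spec.1
  have hpw : ∀ j, w j = fun t => (p j).eval t := fun j => (hw j).choose_spec.2
  -- abbreviations for traces of `w`
  have hPshift : ∀ j : Fin N, dgTraceP N x w (j - 1) = w j (x j.castSucc) := by
    intro j
    simp [dgTraceP, sub_add_cancel]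
  have hM : ∀ j : Fin N, dgTraceM N x w j = (p j).eval (x j.succ) := by
    intro j; rw [dgTraceM, hpw j]
  have hPm : ∀ j : Fin N, dgTraceP N x w (j - 1) = (p j).eval (x j.castSucc) := by
    intro j; rw [hPshift j, hpw j]
  -- derivative of pieces
  have hderivw : ∀ j : Fin N, deriv (w j) = fun t => (derivative (p j)).eval t := by
    intro j; funext t; rw [hpw j]; exact Polynomial.deriv (p := p j)
  -- Step A: jumps vanish
  have hHw := hH w hw
  have hjump : ∀ j : Fin N, dgTraceP N x w j - dgTraceM N x w j = 0 := by
    have hFexp : ∀ j : Fin N,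
        ((∫ t in (x j.castSucc)..(x j.succ), w j t * (fun j => deriv (w j)) j t)
          - (lam * dgTraceM N x w j + (1 - lam) * dgTraceP N x w j) * dgTraceM N x w j
          + (lam * dgTraceM N x w (j - 1) + (1 - lam) * dgTraceP N x w (j - 1)) *
              dgTraceP N x w (j - 1))
        = ((dgTraceM N x w j) ^ 2 - (dgTraceP N x w (j - 1)) ^ 2) / 2
          - (lam * dgTraceM N x w j + (1 - lam) * dgTraceP N x w j) * dgTraceM N x w j
          + (lam * dgTraceM N x w (j - 1) + (1 - lam) * dgTraceP N x w (j - 1)) *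
              dgTraceP N x w (j - 1) := by
      intro j
      have hint : (∫ t in (x j.castSucc)..(x j.succ), w j t * (fun j => deriv (w j)) j t)
          = ((dgTraceM N x w j) ^ 2 - (dgTraceP N x w (j - 1)) ^ 2) / 2 := by
        rw [hM j, hPm j]
        have : (∫ t in (x j.castSucc)..(x j.succ), w j t * (fun j => deriv (w j)) j t)
            = ∫ t in (x j.castSucc)..(x j.succ), (p j).eval t * (derivative (p j)).eval t := by
          simp only [hderivw j]
          rw [hpw j]
        rw [this, dg_self_parts]
      rw [hint]
    have hsum : dgH N x lam w w (fun j => deriv (w j))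
        = (1 / 2 - lam) * ∑ j : Fin N, (dgTraceP N x w j - dgTraceM N x w j) ^ 2 := by
      rw [dgH]
      exact dg_cyclic_jump N lam (dgTraceM N x w) (dgTraceP N x w) _ hFexp
    rw [hHw] at hsum
    have hsum0 : ∑ j : Fin N, (dgTraceP N x w j - dgTraceM N x w j) ^ 2 = 0 := by
      have hne : (1 / 2 - lam) ≠ 0 := by linarith
      have hsum := hsum.symm; rw [mul_eq_zero] at hsum
      rcases hsum with h | h
      · exact absurd h (by intro h'; apply hne; linarith)
      · exact h
    intro j
    have := (Finset.sum_eq_zero_iff_of_nonneg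
      (fun i _ => sq_nonneg (dgTraceP N x w i - dgTraceM N x w i))).mp hsum0 j (Finset.mem_univ j)
    exact pow_eq_zero_iff (n := 2) (by norm_num) |>.mp this
  -- traces equal
  have hPM : ∀ j : Fin N, dgTraceP N x w j = dgTraceM N x w j := by
    intro j; have := hjump j; linarith
  -- Step B: derivative pieces vanish
  set φ : Fin N → ℝ → ℝ := fun j t => (derivative (p j)).eval t with hφdef
  have hφpoly : isDGPoly N k φ := by
    intro j
    exact ⟨derivative (p j),
      le_trans (natDegree_derivative_le _) (le_trans (Nat.sub_le _ _) (hpdeg j)), rfl⟩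
  have hHφ := hH φ hφpoly
  have hS0 : ∀ j : Fin N,
      (∫ t in (x j.castSucc)..(x j.succ), ((derivative (p j)).eval t) ^ 2) = 0 := by
    have hderivφ : ∀ j : Fin N, deriv (φ j) = fun t => (derivative (derivative (p j))).eval t := by
      intro j; funext t; simp only [hφdef]; exact Polynomial.deriv (p := derivative (p j))
    have hφM : ∀ j : Fin N, dgTraceM N x φ j = (derivative (p j)).eval (x j.succ) := fun j => rfl
    have hφP : ∀ j : Fin N, dgTraceP N x φ (j - 1)
        = (derivative (p j)).eval (x j.castSucc) := by
      intro j
      show (derivative (p (j - 1 + 1))).eval (x (j - 1 + 1 : Fin N).castSucc) = _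
      rw [sub_add_cancel]
    have hterm : ∀ j : Fin N,
        ((∫ t in (x j.castSucc)..(x j.succ), w j t * (fun j => deriv (φ j)) j t)
          - (lam * dgTraceM N x w j + (1 - lam) * dgTraceP N x w j) * dgTraceM N x φ j
          + (lam * dgTraceM N x w (j - 1) + (1 - lam) * dgTraceP N x w (j - 1)) *
              dgTraceP N x φ (j - 1))
        = -(∫ t in (x j.castSucc)..(x j.succ), ((derivative (p j)).eval t) ^ 2) := by
      intro j
      have hint : (∫ t in (x j.castSucc)..(x j.succ), w j t * (fun j => deriv (φ j)) j t)
          = (p j).eval (x j.succ) * (derivative (p j)).eval (x j.succ)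
            - (p j).eval (x j.castSucc) * (derivative (p j)).eval (x j.castSucc)
            - ∫ t in (x j.castSucc)..(x j.succ), ((derivative (p j)).eval t) ^ 2 := by
        have e1 : (∫ t in (x j.castSucc)..(x j.succ), w j t * (fun j => deriv (φ j)) j t)
            = ∫ t in (x j.castSucc)..(x j.succ),
                (p j).eval t * (derivative (derivative (p j))).eval t := by
          simp only [hderivφ j]
          rw [hpw j]
        rw [e1, dg_parts]
        congr 1
        refine intervalIntegral.integral_congr fun t _ => ?_
        ring
      have h2 : dgTraceP N x w j = Polynomial.eval (x j.succ) (p j) := (hPM j).trans (hM j)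
      have h4 : dgTraceM N x w (j - 1) = Polynomial.eval (x j.castSucc) (p j) :=
        (hPM (j - 1)).symm.trans (hPm j)
      rw [hint, hφM j, hφP j, h2, hPm j, h4, hM j]
      ring
    have hsum : dgH N x lam w φ (fun j => deriv (φ j))
        = -∑ j : Fin N, ∫ t in (x j.castSucc)..(x j.succ), ((derivative (p j)).eval t) ^ 2 := by
      rw [dgH, ← Finset.sum_neg_distrib]
      exact Finset.sum_congr rfl fun j _ => hterm j
    rw [hHφ] at hsum
    have hsum0 : ∑ j : Fin N,
        (∫ t in (x j.castSucc)..(x j.succ), ((derivative (p j)).eval t) ^ 2) = 0 := by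
      linarith [hsum]
    intro j
    exact (Finset.sum_eq_zero_iff_of_nonneg (fun i _ =>
      intervalIntegral.integral_nonneg (hx i).le (fun t _ => sq_nonneg _))).mp
        hsum0 j (Finset.mem_univ j)
  -- each piece is the constant `(p j).coeff 0`
  have hconstpiece : ∀ j : Fin N, ∀ t : ℝ, w j t = (p j).coeff 0 := by
    intro j t
    have hd0 : derivative (p j) = 0 := dg_deriv_zero _ _ _ (hx j) (hS0 j)
    have := Polynomial.eq_C_of_derivative_eq_zero hd0
    rw [hpw j]
    simp only
    conv_lhs => rw [this]
    rw [Polynomial.eval_C]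
  -- constants agree cyclically
  have hcyc : ∀ j : Fin N, (p (j + 1)).coeff 0 = (p j).coeff 0 := by
    intro j
    have := hjump j
    rw [dgTraceP, dgTraceM, hconstpiece (j + 1), hconstpiece j] at this
    linarith
  have hnat : ∀ m : ℕ, (p ((m : Fin N))).coeff 0 = (p 0).coeff 0 := by
    intro m
    induction m with
    | zero => simp
    | succ n ih =>
        have hcast : ((n + 1 : ℕ) : Fin N) = ((n : ℕ) : Fin N) + 1 := by push_cast; ring
        rw [hcast, hcyc]; exact ih
  have hconst : ∀ j : Fin N, (p j).coeff 0 = (p 0).coeff 0 := by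
    intro j
    have := hnat j.val
    rwa [Fin.cast_val_eq_self] at this
  -- zero mean forces the constant to vanish
  have hc0 : (p 0).coeff 0 = 0 := by
    have hmean' : ∑ j : Fin N, ∫ t in (x j.castSucc)..(x j.succ), w j t
        = (p 0).coeff 0 * (x (Fin.last N) - x 0) := by
      calc ∑ j : Fin N, ∫ t in (x j.castSucc)..(x j.succ), w j t
          = ∑ j : Fin N, (p 0).coeff 0 * (x j.succ - x j.castSucc) := by
            refine Finset.sum_congr rfl fun j _ => ?_
            have : (∫ t in (x j.castSucc)..(x j.succ), w j t)
                = ∫ t in (x j.castSucc)..(x j.succ), (p 0).coeff 0 := by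
              refine intervalIntegral.integral_congr fun t _ => ?_
              rw [hconstpiece j t, hconst j]
            rw [this, intervalIntegral.integral_const, smul_eq_mul, mul_comm]
        _ = (p 0).coeff 0 * ∑ j : Fin N, (x j.succ - x j.castSucc) := by
            rw [Finset.mul_sum]
        _ = (p 0).coeff 0 * (x (Fin.last N) - x 0) := by rw [dg_telescope]
    rw [hmean, hx0, hx2π] at hmean'
    have hpi := Real.pi_pos
    have : (p 0).coeff 0 * (2 * Real.pi) = 0 := by linarith [hmean'.symm]
    rcases mul_eq_zero.mp this with h | h
    · exact h
    · exfalso; linarith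
  refine ⟨hjump, fun j t _ => ?_⟩
  rw [hconstpiece j t, hconst j, hc0]
end
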